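/- For every integer k ≥ 0, setting μ = 16 + 2k, the following inequality of rational numbers holds: (7/8 − 3/2)² + (9/8 − 3/2)² + 2·(11/8 − 3/2)² + 2·(13/8 − 3/2)² + (15/8 − 3/2)² + (17/8 − 3/2)² + ∑_{l=1}^{2k+8} ((l + 2k + 9)/(2k+9) − 3/2)² ≤ (μ/12)·(17/8 − 7/8). -/
import Mathlib

lemma s1q (m : ℕ) : ∑ l ∈ Finset.Icc 1 m, (l : ℚ) = m * (m + 1) / 2 := by
  induction m with
  | zero => simp
  | succ n ih =>
    rw [Finset.sum_Icc_succ_top (by omega), ih]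
    push_cast; ring

lemma s2q (m : ℕ) : ∑ l ∈ Finset.Icc 1 m, (l : ℚ) ^ 2 = m * (m + 1) * (2 * m + 1) / 6 := by
  induction m with
  | zero => simp
  | succ n ih =>
    rw [Finset.sum_Icc_succ_top (by omega), ih]
    push_cast; ring

theorem stmt_5 (k : ℕ) :
    ((7/8 : ℚ) - 3/2) ^ 2 +
      ((9/8 : ℚ) - 3/2) ^ 2 +
      2 * ((11/8 : ℚ) - 3/2) ^ 2 +
      2 * ((13/8 : ℚ) - 3/2) ^ 2 +
      ((15/8 : ℚ) - 3/2) ^ 2 +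
      ((17/8 : ℚ) - 3/2) ^ 2 +
      ∑ l ∈ Finset.Icc 1 (2 * k + 8), (((l : ℚ) + 2 * (k : ℚ) + 9) / (2 * (k : ℚ) + 9) - 3/2) ^ 2
    ≤ ((16 + 2 * (k : ℚ)) / 12) * (17/8 - 7/8) := by
  have hx : (0 : ℚ) ≤ (k : ℚ) := Nat.cast_nonneg k
  have hD : (0 : ℚ) < 2 * (k : ℚ) + 9 := by linarith
  have hD' : (2 * (k : ℚ) + 9) ≠ 0 := ne_of_gt hD
  have hsum : ∑ l ∈ Finset.Icc 1 (2 * k + 8),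
      (((l : ℚ) + 2 * (k : ℚ) + 9) / (2 * (k : ℚ) + 9) - 3/2) ^ 2
      = ∑ l ∈ Finset.Icc 1 (2 * k + 8),
        ((l : ℚ) ^ 2 * (1 / (2 * (k : ℚ) + 9) ^ 2) - (l : ℚ) * (1 / (2 * (k : ℚ) + 9)) + 1/4) := by
    refine Finset.sum_congr rfl fun l _ => ?_
    field_simp
    ring
  rw [hsum, Finset.sum_add_distrib, Finset.sum_sub_distrib, ← Finset.sum_mul, ← Finset.sum_mul,
    s1q, s2q, Finset.sum_const, Nat.card_Icc]
  simp only [nsmul_eq_mul]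
  push_cast
  rw [← sub_nonneg]
  have key : ((16 + 2 * (k : ℚ)) / 12) * (17/8 - 7/8) -
      (((7/8 : ℚ) - 3/2) ^ 2 + ((9/8 : ℚ) - 3/2) ^ 2 + 2 * ((11/8 : ℚ) - 3/2) ^ 2 +
        2 * ((13/8 : ℚ) - 3/2) ^ 2 + ((15/8 : ℚ) - 3/2) ^ 2 + ((17/8 : ℚ) - 3/2) ^ 2 +
        ((2 * (k : ℚ) + 8) * ((2 * (k : ℚ) + 8) + 1) * (2 * (2 * (k : ℚ) + 8) + 1) / 6 *
            (1 / (2 * (k : ℚ) + 9) ^ 2) -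
          (2 * (k : ℚ) + 8) * ((2 * (k : ℚ) + 8) + 1) / 2 * (1 / (2 * (k : ℚ) + 9)) +
          (2 * (k : ℚ) + 8) * (1/4)))
      = (2 * (k : ℚ) ^ 2 + 11 * (k : ℚ) + 5) / (24 * (2 * (k : ℚ) + 9)) := by
    field_simp
    ring
  have hpos : (0 : ℚ) ≤ (2 * (k : ℚ) ^ 2 + 11 * (k : ℚ) + 5) / (24 * (2 * (k : ℚ) + 9)) := by
    positivity
  linarith [key, hpos]
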